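/- arXiv:1307.1106 — 2 statements merged into one kernel-verified Lean document; each statement's English description precedes it below -/
import Mathlib

section
/- Let F: ℝ × [0,1] → ℝ × [0,1] be a lift of an annulus homeomorphism commuting with the unit translation T(θ,J) = (θ+1,J). If M ⊆ ℝ × [0,1] is a monotone invariant set (i.e., π_θ(z₁) < π_θ(z₂) implies π_θ(F(z₁)) < π_θ(F(z₂)) for z₁,z₂ ∈ M, and M is invariant under F and T), then for every z ∈ M the rotation number ρ(z) = lim_{n→∞} (π_θ(Fⁿ(z)) − π_θ(z))/n exists, and all points of M have the same rotation number. -/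
open Filter Function Topology

private lemma stmt11_aux (F : (ℝ × ℝ) ≃ₜ (ℝ × ℝ))
    (hcomm : ∀ z : ℝ × ℝ, F (z.1 + 1, z.2) = ((F z).1 + 1, (F z).2))
    (M : Set (ℝ × ℝ))
    (hFinv : ∀ z ∈ M, F z ∈ M)
    (hTinv : ∀ z ∈ M, ((z.1 + 1, z.2) : ℝ × ℝ) ∈ M)
    (hmono : ∀ z₁ ∈ M, ∀ z₂ ∈ M, z₁.1 < z₂.1 → (F z₁).1 < (F z₂).1) :
    ∀ z ∈ M, ∀ w ∈ M, ∀ n : ℕ,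
      ((⇑F)^[n] w).1 - w.1 ≤ ((⇑F)^[n] z).1 - z.1 + 1 := by
  -- iterated invariance
  have hFn : ∀ n : ℕ, ∀ z ∈ M, (⇑F)^[n] z ∈ M := by
    intro n
    induction n with
    | zero => intro z hz; simpa using hz
    | succ n ih =>
      intro z hz
      rw [Function.iterate_succ_apply]
      exact ih _ (hFinv z hz)
  -- iterated commutation with T
  have hcommn : ∀ n : ℕ, ∀ z : ℝ × ℝ,
      (⇑F)^[n] (z.1 + 1, z.2) = (((⇑F)^[n] z).1 + 1, ((⇑F)^[n] z).2) := by
    intro n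
    induction n with
    | zero => intro z; simp
    | succ n ih =>
      intro z
      rw [Function.iterate_succ_apply, Function.iterate_succ_apply, hcomm z, ih (F z)]
  -- commutation with T^k
  have hcommk : ∀ k : ℕ, ∀ z : ℝ × ℝ, ∀ n : ℕ,
      (⇑F)^[n] (z.1 + k, z.2) = (((⇑F)^[n] z).1 + k, ((⇑F)^[n] z).2) := by
    intro k
    induction k with
    | zero => intro z n; simp
    | succ k ih =>
      intro z n
      have h1 : (z.1 + (k + 1 : ℕ) : ℝ) = (z.1 + k) + 1 := by push_cast; ring
      have h2 : ((z.1 + (k:ℕ), z.2) : ℝ × ℝ).1 = z.1 + (k:ℕ) := rfl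
      calc (⇑F)^[n] (z.1 + (k+1 : ℕ), z.2)
          = (⇑F)^[n] (((z.1 + (k:ℕ), z.2) : ℝ × ℝ).1 + 1, ((z.1 + (k:ℕ), z.2) : ℝ × ℝ).2) := by
            rw [h1]
        _ = (((⇑F)^[n] (z.1 + (k:ℕ), z.2)).1 + 1, ((⇑F)^[n] (z.1 + (k:ℕ), z.2)).2) :=
            hcommn n _
        _ = (((⇑F)^[n] z).1 + (k+1 : ℕ), ((⇑F)^[n] z).2) := by
            rw [ih z n]; push_cast; ring_nf
  -- T^k invariance
  have hTk : ∀ k : ℕ, ∀ z ∈ M, ((z.1 + k, z.2) : ℝ × ℝ) ∈ M := by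
    intro k
    induction k with
    | zero => intro z hz; simpa using hz
    | succ k ih =>
      intro z hz
      have := hTinv _ (ih z hz)
      have h1 : (z.1 + (k:ℕ) + 1 : ℝ) = z.1 + (k + 1 : ℕ) := by push_cast; ring
      simpa [h1] using this
  -- iterated monotonicity
  have hmonon : ∀ n : ℕ, ∀ z₁ ∈ M, ∀ z₂ ∈ M, z₁.1 < z₂.1 →
      ((⇑F)^[n] z₁).1 < ((⇑F)^[n] z₂).1 := by
    intro n
    induction n with
    | zero => intro z₁ _ z₂ _ h; simpa using h
    | succ n ih =>
      intro z₁ h₁ z₂ h₂ h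
      rw [Function.iterate_succ_apply, Function.iterate_succ_apply]
      exact ih _ (hFinv _ h₁) _ (hFinv _ h₂) (hmono _ h₁ _ h₂ h)
  -- comparison lemma
  have hcompare : ∀ z ∈ M, ∀ w ∈ M, ∀ m : ℕ, w.1 < z.1 + m → ∀ n : ℕ,
      ((⇑F)^[n] w).1 < ((⇑F)^[n] z).1 + m := by
    intro z hz w hw m hm n
    have h1 := hmonon n w hw _ (hTk m z hz) hm
    rwa [hcommk m z n] at h1
  -- key displacement bound
  intro z hz w hw n
  -- shift w to the right of z
  set j : ℕ := ⌈z.1 - w.1⌉₊ with hj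
  have hwj : z.1 ≤ w.1 + j := by
    have := Nat.le_ceil (z.1 - w.1)
    linarith
  set w' : ℝ × ℝ := (w.1 + j, w.2) with hw'
  have hw'M : w' ∈ M := hTk j w hw
  set d : ℝ := w'.1 - z.1 with hd
  have hd0 : 0 ≤ d := by simp only [hd, hw']; linarith
  set m : ℕ := ⌊d⌋₊ + 1 with hm
  have hw1 : w'.1 = w.1 + j := rfl
  have hlt : w'.1 < z.1 + m := by
    have h0 : d < (⌊d⌋₊ : ℝ) + 1 := Nat.lt_floor_add_one d
    have h1 : d < (m : ℝ) := by push_cast [hm]; linarith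
    simp only [hd, hw1] at h1
    rw [hw1]; linarith
  have hmle : (m : ℝ) ≤ d + 1 := by
    have := Nat.floor_le hd0
    push_cast [hm]; linarith
  have h2 := hcompare z hz w' hw'M m hlt n
  have h3 : ((⇑F)^[n] w').1 = ((⇑F)^[n] w).1 + j := by
    have := hcommk j w n
    simp only [hw']
    rw [this]
  rw [h3] at h2
  have hw'1 : w'.1 = w.1 + j := rfl
  simp only [hd, hw'1] at hmle
  linarith

theorem stmt11 (F : (ℝ × ℝ) ≃ₜ (ℝ × ℝ))
    (hcomm : ∀ z : ℝ × ℝ, F (z.1 + 1, z.2) = ((F z).1 + 1, (F z).2))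
    (M : Set (ℝ × ℝ))
    (hFinv : ∀ z ∈ M, F z ∈ M)
    (hTinv : ∀ z ∈ M, ((z.1 + 1, z.2) : ℝ × ℝ) ∈ M)
    (hmono : ∀ z₁ ∈ M, ∀ z₂ ∈ M, z₁.1 < z₂.1 → (F z₁).1 < (F z₂).1) :
    ∃ ρ : ℝ, ∀ z ∈ M,
      Filter.Tendsto (fun n : ℕ => (((⇑F)^[n] z).1 - z.1) / n)
        Filter.atTop (nhds ρ) := by
  rcases M.eq_empty_or_nonempty with hM | ⟨z₀, hz₀⟩
  · exact ⟨0, fun z hz => by rw [hM] at hz; exact absurd hz (Set.notMem_empty z)⟩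
  have key := stmt11_aux F hcomm M hFinv hTinv hmono
  have hFn : ∀ n : ℕ, ∀ z ∈ M, (⇑F)^[n] z ∈ M := by
    intro n
    induction n with
    | zero => intro z hz; simpa using hz
    | succ n ih =>
      intro z hz
      rw [Function.iterate_succ_apply]
      exact ih _ (hFinv z hz)
  -- displacement of z₀
  set u : ℕ → ℝ := fun n => ((⇑F)^[n] z₀).1 - z₀.1 with hu
  have hquasi : ∀ m n : ℕ, u m + u n - 1 ≤ u (m + n) ∧ u (m + n) ≤ u m + u n + 1 := by
    intro m n
    have hiter : (⇑F)^[m + n] z₀ = (⇑F)^[m] ((⇑F)^[n] z₀) := Function.iterate_add_apply _ m n z₀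
    have hmem : (⇑F)^[n] z₀ ∈ M := hFn n z₀ hz₀
    have h1 := key z₀ hz₀ ((⇑F)^[n] z₀) hmem m
    have h2 := key ((⇑F)^[n] z₀) hmem z₀ hz₀ m
    constructor
    · simp only [hu, hiter]; linarith
    · simp only [hu, hiter]; linarith
  -- u n ≥ n*(u 1 - 1) and u n ≤ n*(u 1 + 1)
  have hbounds : ∀ n : ℕ, (n : ℝ) * (u 1 - 1) ≤ u n ∧ u n ≤ (n : ℝ) * (u 1 + 1) := by
    intro n
    induction n with
    | zero => simp [hu]
    | succ n ih =>
      obtain ⟨hl, hr⟩ := ih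
      obtain ⟨hl2, hr2⟩ := hquasi n 1
      constructor
      · push_cast; nlinarith
      · push_cast; nlinarith
  -- two subadditive sequences
  have hsub1 : Subadditive (fun n => u n + 1) := by
    intro m n; have := (hquasi m n).2; simp only []; linarith
  have hsub2 : Subadditive (fun n => 1 - u n) := by
    intro m n; have := (hquasi m n).1; simp only []; linarith
  have hbdd1 : BddBelow (Set.range fun n : ℕ => (u n + 1) / n) := by
    refine ⟨min 0 (u 1 - 1), Set.forall_mem_range.2 fun n => ?_⟩
    rcases Nat.eq_zero_or_pos n with rfl | hn
    · simp
    · have hnp : (0:ℝ) < n := by exact_mod_cast hn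
      refine le_trans (min_le_right _ _) ?_
      rw [le_div_iff₀ hnp]
      have := (hbounds n).1
      linarith
  have hbdd2 : BddBelow (Set.range fun n : ℕ => (1 - u n) / n) := by
    refine ⟨min 0 (-(u 1) - 1), Set.forall_mem_range.2 fun n => ?_⟩
    rcases Nat.eq_zero_or_pos n with rfl | hn
    · simp
    · have hnp : (0:ℝ) < n := by exact_mod_cast hn
      refine le_trans (min_le_right _ _) ?_
      rw [le_div_iff₀ hnp]
      have := (hbounds n).2
      linarith
  have hT1 := hsub1.tendsto_lim hbdd1
  have hT2 := hsub2.tendsto_lim hbdd2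
  -- sum of limits is 0
  have hsum : Tendsto (fun n : ℕ => (u n + 1) / n + (1 - u n) / n) atTop
      (𝓝 (hsub1.lim + hsub2.lim)) := hT1.add hT2
  have hsum' : Tendsto (fun n : ℕ => (u n + 1) / n + (1 - u n) / n) atTop (𝓝 0) := by
    have heq : ∀ᶠ n : ℕ in atTop, (u n + 1) / n + (1 - u n) / n = 2 / n := by
      filter_upwards [eventually_ne_atTop 0] with n hn
      have hnp : (n:ℝ) ≠ 0 := Nat.cast_ne_zero.2 hn
      field_simp; ring
    have h2 : Tendsto (fun n : ℕ => (2:ℝ) / n) atTop (𝓝 0) :=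
      tendsto_const_div_atTop_nhds_zero_nat 2
    refine h2.congr' ?_
    filter_upwards [heq] with n hn
    exact hn.symm
  have hlimeq : hsub1.lim + hsub2.lim = 0 := tendsto_nhds_unique hsum hsum'
  -- the rotation number
  refine ⟨hsub1.lim, fun z hz => ?_⟩
  -- u_z n / n → hsub1.lim
  have hTu : Tendsto (fun n : ℕ => u n / n) atTop (𝓝 hsub1.lim) := by
    have h1 : Tendsto (fun n : ℕ => (u n + 1) / n - 1 / n) atTop (𝓝 (hsub1.lim - 0)) :=
      hT1.sub (tendsto_const_div_atTop_nhds_zero_nat 1)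
    rw [sub_zero] at h1
    refine h1.congr' ?_
    filter_upwards [eventually_ne_atTop 0] with n hn
    have hnp : (n:ℝ) ≠ 0 := Nat.cast_ne_zero.2 hn
    field_simp; ring
  -- squeeze
  have hle1 : ∀ n : ℕ, ((⇑F)^[n] z).1 - z.1 ≤ u n + 1 := fun n => key z₀ hz₀ z hz n
  have hle2 : ∀ n : ℕ, u n - 1 ≤ ((⇑F)^[n] z).1 - z.1 := by
    intro n
    have := key z hz z₀ hz₀ n
    simp only [hu]; linarith
  have hlower : Tendsto (fun n : ℕ => (u n - 1) / n) atTop (𝓝 hsub1.lim) := by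
    have h1 : Tendsto (fun n : ℕ => u n / n - 1 / n) atTop (𝓝 (hsub1.lim - 0)) :=
      hTu.sub (tendsto_const_div_atTop_nhds_zero_nat 1)
    rw [sub_zero] at h1
    refine h1.congr' ?_
    filter_upwards [eventually_ne_atTop 0] with n hn
    have hnp : (n:ℝ) ≠ 0 := Nat.cast_ne_zero.2 hn
    field_simp
  have hupper : Tendsto (fun n : ℕ => (u n + 1) / n) atTop (𝓝 hsub1.lim) := by
    have h1 : Tendsto (fun n : ℕ => u n / n + 1 / n) atTop (𝓝 (hsub1.lim + 0)) :=
      hTu.add (tendsto_const_div_atTop_nhds_zero_nat 1)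
    rw [add_zero] at h1
    refine h1.congr' ?_
    filter_upwards [eventually_ne_atTop 0] with n hn
    have hnp : (n:ℝ) ≠ 0 := Nat.cast_ne_zero.2 hn
    field_simp
  refine tendsto_of_tendsto_of_tendsto_of_le_of_le' hlower hupper ?_ ?_
  · filter_upwards [eventually_ge_atTop 1] with n hn
    have hnp : (0:ℝ) < n := by exact_mod_cast hn
    exact div_le_div_of_nonneg_right (hle2 n) hnp.le
  · filter_upwards [eventually_ge_atTop 1] with n hn
    have hnp : (0:ℝ) < n := by exact_mod_cast hn
    exact div_le_div_of_nonneg_right (hle1 n) hnp.le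
end

section
/- Let Φ: [0,T] → Sp(1) be a continuous arc of 2×2 symplectic matrices with Φ(0) = Id. For z ∈ ℂ∖{0}, write Φ(t)z = r(t)e^{2πiθ(t)} with θ continuous, and set Δ(z) = θ(T) − θ(0). Then the winding interval I(Φ) = {Δ(z) : z ∈ ℂ∖{0}} is an interval of length strictly less than 1/2; consequently I(Φ) either contains exactly one integer or lies strictly between two consecutive integers. -/
open Matrix

lemma aux_no_int (f : ℝ → ℝ) (T : ℝ) (hT : 0 ≤ T)
    (hf : ContinuousOn f (Set.Icc 0 T))
    (h : ∀ t ∈ Set.Icc 0 T, ∀ n : ℤ, f t ≠ (n : ℝ)) :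
    |f T - f 0| < 1 := by
  by_contra hc
  push_neg at hc
  have huIcc : Set.uIcc (0:ℝ) T = Set.Icc 0 T := Set.uIcc_of_le hT
  have hsub : Set.uIcc (f 0) (f T) ⊆ f '' Set.Icc 0 T := by
    rw [← huIcc]; exact intermediate_value_uIcc (by rwa [huIcc])
  set a := min (f 0) (f T) with ha
  set b := max (f 0) (f T) with hb
  have hIcc : Set.uIcc (f 0) (f T) = Set.Icc a b := rfl
  have hab : a + 1 ≤ b := by
    rcases abs_cases (f T - f 0) with ⟨he, _⟩ | ⟨he, _⟩
    · have h1 : f 0 ≤ f T := by linarith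
      rw [ha, hb, min_eq_left h1, max_eq_right h1]; linarith
    · have h1 : f T ≤ f 0 := by linarith
      rw [ha, hb, min_eq_right h1, max_eq_left h1]; linarith
  have hna : a ≤ ((⌊a⌋ + 1 : ℤ) : ℝ) := by push_cast; linarith [Int.lt_floor_add_one a]
  have hnb : ((⌊a⌋ + 1 : ℤ) : ℝ) ≤ b := by push_cast; linarith [Int.floor_le a]
  have hmem : ((⌊a⌋ + 1 : ℤ) : ℝ) ∈ Set.uIcc (f 0) (f T) := by
    rw [hIcc]; exact ⟨hna, hnb⟩
  obtain ⟨t, ht, hft⟩ := hsub hmem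
  exact h t ht _ hft

lemma aux_all_int (f : ℝ → ℝ) (T : ℝ) (hT : 0 ≤ T)
    (hf : ContinuousOn f (Set.Icc 0 T))
    (h : ∀ t ∈ Set.Icc 0 T, ∃ n : ℤ, f t = (n : ℝ)) :
    f T = f 0 := by
  by_contra hne
  obtain ⟨n0, hn0⟩ := h 0 ⟨le_refl 0, hT⟩
  obtain ⟨n1, hn1⟩ := h T ⟨hT, le_refl T⟩
  have hnn : n0 ≠ n1 := fun he => hne (by rw [hn0, hn1, he])
  have huIcc : Set.uIcc (0:ℝ) T = Set.Icc 0 T := Set.uIcc_of_le hT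
  have hsub : Set.uIcc (f 0) (f T) ⊆ f '' Set.Icc 0 T := by
    rw [← huIcc]; exact intermediate_value_uIcc (by rwa [huIcc])
  set a := min (f 0) (f T) with ha
  set b := max (f 0) (f T) with hb
  have hIcc : Set.uIcc (f 0) (f T) = Set.Icc a b := rfl
  have hab : a + 1 ≤ b := by
    rcases le_total (f 0) (f T) with h1 | h1
    · have h2 : n0 ≤ n1 := by rw [hn0, hn1] at h1; exact_mod_cast h1
      have h3 : n0 + 1 ≤ n1 := by omega
      rw [ha, hb, min_eq_left h1, max_eq_right h1, hn0, hn1]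
      exact_mod_cast h3
    · have h2 : n1 ≤ n0 := by rw [hn0, hn1] at h1; exact_mod_cast h1
      have h3 : n1 + 1 ≤ n0 := by omega
      rw [ha, hb, min_eq_right h1, max_eq_left h1, hn0, hn1]
      exact_mod_cast h3
  have hmem : a + 1/2 ∈ Set.uIcc (f 0) (f T) := by
    rw [hIcc]; exact ⟨by linarith, by linarith⟩
  obtain ⟨t, ht, hft⟩ := hsub hmem
  obtain ⟨n, hn⟩ := h t ht
  have hap : ∃ m : ℤ, a = (m : ℝ) := by
    rcases le_total (f 0) (f T) with h1 | h1
    · exact ⟨n0, by rw [ha, min_eq_left h1, hn0]⟩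
    · exact ⟨n1, by rw [ha, min_eq_right h1, hn1]⟩
  obtain ⟨m, hm⟩ := hap
  rw [hn, hm] at hft
  have : (2*n : ℝ) = 2*m + 1 := by linarith
  have h2 : (2*n : ℤ) = 2*m + 1 := by exact_mod_cast this
  omega

theorem stmt12 (T : ℝ) (hT : 0 < T)
    (Φ : ℝ → Matrix (Fin 2) (Fin 2) ℝ)
    (hcont : ContinuousOn Φ (Set.Icc 0 T))
    (h0 : Φ 0 = 1)
    (hsymp : ∀ t ∈ Set.Icc 0 T,
      (Φ t).transpose * !![(0 : ℝ), 1; -1, 0] * Φ t = !![(0 : ℝ), 1; -1, 0])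
    (θ r : ℝ × ℝ → ℝ → ℝ)
    (harg : ∀ z : ℝ × ℝ, z ≠ 0 →
      ContinuousOn (θ z) (Set.Icc 0 T) ∧
      ∀ t ∈ Set.Icc 0 T, 0 < r z t ∧
        Φ t *ᵥ ![z.1, z.2] =
          r z t • ![Real.cos (2 * Real.pi * θ z t), Real.sin (2 * Real.pi * θ z t)]) :
    (∀ z w : ℝ × ℝ, z ≠ 0 → w ≠ 0 →
      |(θ z T - θ z 0) - (θ w T - θ w 0)| < 1 / 2) ∧
    (∀ m n : ℤ, (∃ z : ℝ × ℝ, z ≠ 0 ∧ θ z T - θ z 0 = (m : ℝ)) →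
      (∃ w : ℝ × ℝ, w ≠ 0 ∧ θ w T - θ w 0 = (n : ℝ)) → m = n) := by
  have main : ∀ z w : ℝ × ℝ, z ≠ 0 → w ≠ 0 →
      |(θ z T - θ z 0) - (θ w T - θ w 0)| < 1 / 2 := by
    intro z w hz hw
    obtain ⟨hθz, hz'⟩ := harg z hz
    obtain ⟨hθw, hw'⟩ := harg w hw
    set c := z.1 * w.2 - z.2 * w.1 with hc
    -- determinant is nonzero
    have hdet : ∀ t ∈ Set.Icc 0 T, (Φ t).det ≠ 0 := by
      intro t ht
      have h1 := congrArg Matrix.det (hsymp t ht)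
      rw [Matrix.det_mul, Matrix.det_mul, Matrix.det_transpose] at h1
      simp [Matrix.det_fin_two_of] at h1
      intro h2
      rw [h2] at h1
      simp at h1
    -- the key cross-product identity
    have key : ∀ t ∈ Set.Icc 0 T,
        r z t * r w t * Real.sin (2*Real.pi*θ w t - 2*Real.pi*θ z t) = (Φ t).det * c := by
      intro t ht
      obtain ⟨hrz, hez⟩ := hz' t ht
      obtain ⟨hrw, hew⟩ := hw' t ht
      have ez0 := congrFun hez 0
      have ez1 := congrFun hez 1
      have ew0 := congrFun hew 0
      have ew1 := congrFun hew 1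
      simp [Matrix.mulVec, dotProduct, Fin.sum_univ_two] at ez0 ez1 ew0 ew1
      have E : (r z t * Real.cos (2*Real.pi*θ z t)) * (r w t * Real.sin (2*Real.pi*θ w t))
          - (r z t * Real.sin (2*Real.pi*θ z t)) * (r w t * Real.cos (2*Real.pi*θ w t))
          = (Φ t).det * c := by
        rw [← ez0, ← ez1, ← ew0, ← ew1, Matrix.det_fin_two, hc]
        ring
      rw [Real.sin_sub]
      linear_combination E
    set f : ℝ → ℝ := fun t => 2 * (θ w t - θ z t) with hf
    have hfc : ContinuousOn f (Set.Icc 0 T) :=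
      continuousOn_const.mul (hθw.sub hθz)
    have hpi : Real.pi ≠ 0 := Real.pi_ne_zero
    have hsin : ∀ t ∈ Set.Icc 0 T,
        Real.sin (Real.pi * f t) = 0 ↔ c = 0 := by
      intro t ht
      obtain ⟨hrz, _⟩ := hz' t ht
      obtain ⟨hrw, _⟩ := hw' t ht
      have hk := key t ht
      have harg' : Real.pi * f t = 2*Real.pi*θ w t - 2*Real.pi*θ z t := by
        rw [hf]; ring
      rw [harg', ]
      constructor
      · intro hs
        rw [hs, mul_zero] at hk
        rcases mul_eq_zero.mp hk.symm with h1 | h1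
        · exact absurd h1 (hdet t ht)
        · exact h1
      · intro hc0
        rw [hc0, mul_zero] at hk
        rcases mul_eq_zero.mp hk with h1 | h1
        · rcases mul_eq_zero.mp h1 with h2 | h2
          · exact absurd h2 (ne_of_gt hrz)
          · exact absurd h2 (ne_of_gt hrw)
        · exact h1
    have habs : |f T - f 0| < 1 := by
      by_cases hc0 : c = 0
      · have : f T = f 0 := by
          apply aux_all_int f T hT.le hfc
          intro t ht
          have hs := (hsin t ht).mpr hc0
          obtain ⟨n, hn⟩ := Real.sin_eq_zero_iff.mp hs
          refine ⟨n, ?_⟩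
          have h' : Real.pi * f t = Real.pi * (n:ℝ) := by linarith [hn]
          exact mul_left_cancel₀ hpi h'
        rw [this]; simp
      · apply aux_no_int f T hT.le hfc
        intro t ht n hn
        apply hc0
        apply (hsin t ht).mp
        rw [hn]
        have : Real.pi * (n:ℝ) = (n:ℝ) * Real.pi := by ring
        rw [this]
        exact Real.sin_int_mul_pi n
    have : f T - f 0 = 2 * ((θ w T - θ w 0) - (θ z T - θ z 0)) := by rw [hf]; ring
    rw [this] at habs
    rw [abs_mul] at habs
    rw [abs_sub_comm] at habs
    simp only [abs_two] at habs
    linarith [abs_nonneg ((θ z T - θ z 0) - (θ w T - θ w 0))]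
  refine ⟨main, ?_⟩
  rintro m n ⟨z, hz, hZ⟩ ⟨w, hw, hW⟩
  have h1 := main z w hz hw
  rw [hZ, hW] at h1
  have h2 : |((m - n : ℤ) : ℝ)| < 1/2 := by push_cast; exact h1
  have h3 := abs_lt.mp h2
  have h4 : (m - n : ℤ) < 1 := by exact_mod_cast h3.2.trans (by norm_num : (1:ℝ)/2 < 1)
  have h5 : (-1 : ℤ) < m - n := by
    have := h3.1
    have : (-1 : ℝ) < ((m - n : ℤ) : ℝ) := by linarith
    exact_mod_cast this
  omega
end
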